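/- For all integers n ≥ 0, 0 ≤ μ ≤ 6n+3, and real θ with 0 ≤ θ ≤ 1/(3n+2), we have θ·sin(μθ)·∏_{k=0}^{n} cos((3k+1)θ) cos((3k+2)θ) ≥ μθ²·exp(−(6n+3)²θ²/3 − γθ²(6n³+18n²+17n+5)), where γ = −log(cos 1). -/

import Mathlib

open Finset

lemma my_xcos_le_sin {x : ℝ} (h0 : 0 ≤ x) (h : x ≤ 2) : x * Real.cos x ≤ Real.sin x := by
  rcases lt_or_ge x (Real.pi / 2) with h2 | h2
  · rcases eq_or_lt_of_le h0 with rfl | h0'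
    · simp
    · have ht := Real.lt_tan h0' h2
      have hc : 0 < Real.cos x :=
        Real.cos_pos_of_mem_Ioo ⟨by linarith [Real.pi_pos], h2⟩
      rw [Real.tan_eq_sin_div_cos, lt_div_iff₀ hc] at ht
      linarith
  · have hs : 0 ≤ Real.sin x :=
      Real.sin_nonneg_of_nonneg_of_le_pi h0 (by nlinarith [Real.pi_gt_three])
    have hc : Real.cos x ≤ 0 :=
      Real.cos_nonpos_of_pi_div_two_le_of_le h2 (by nlinarith [Real.pi_gt_three])
    nlinarith

lemma my_sinc_anti {u v : ℝ} (hu : 0 < u) (huv : u ≤ v) (hv : v ≤ 2) :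
    u * Real.sin v ≤ v * Real.sin u := by
  have key : AntitoneOn (fun x => Real.sin x / x) (Set.Icc u v) := by
    apply antitoneOn_of_deriv_nonpos (convex_Icc u v)
    · exact Real.continuous_sin.continuousOn.div continuousOn_id
        (fun x hx => ne_of_gt (lt_of_lt_of_le hu hx.1))
    · intro x hx
      rw [interior_Icc] at hx
      exact (((Real.hasDerivAt_sin x).div (hasDerivAt_id x)
        (ne_of_gt (hu.trans hx.1))).differentiableAt).differentiableWithinAt
    · intro x hx
      rw [interior_Icc] at hx
      have hx0 : 0 < x := hu.trans hx.1
      have hd : HasDerivAt (fun x => Real.sin x / x)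
          ((Real.cos x * x - Real.sin x * 1) / x ^ 2) x :=
        (Real.hasDerivAt_sin x).div (hasDerivAt_id x) (ne_of_gt hx0)
      rw [hd.deriv]
      have hkey := my_xcos_le_sin hx0.le (le_of_lt (hx.2.trans_le hv))
      apply div_nonpos_of_nonpos_of_nonneg
      · nlinarith
      · positivity
  have h := key (Set.left_mem_Icc.2 huv) (Set.right_mem_Icc.2 huv) huv
  rw [div_le_div_iff₀ (hu.trans_le huv) hu] at h
  linear_combination h

lemma my_tan_slope {a b : ℝ} (ha : 0 < a) (hab : a ≤ b) (hb : b ≤ 1) :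
    b * (Real.sin a * Real.cos b) ≤ a * (Real.sin b * Real.cos a) := by
  rcases eq_or_lt_of_le hab with rfl | hab'
  · exact le_rfl
  · have h := my_sinc_anti (u := b - a) (v := a + b) (by linarith) (by linarith) (by linarith)
    rw [Real.sin_add] at h
    rw [show b - a = -(a - b) by ring, Real.sin_neg, Real.sin_sub] at h
    linear_combination h / 2

lemma my_cos_sqrt_pos {t : ℝ} (ht0 : 0 ≤ t) (ht1 : t ≤ 1) : 0 < Real.cos (Real.sqrt t) := by
  have h1 : Real.sqrt t ≤ 1 := by
    rw [show (1:ℝ) = Real.sqrt 1 by simp]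
    exact Real.sqrt_le_sqrt ht1
  exact Real.cos_pos_of_mem_Ioo
    ⟨by nlinarith [Real.sqrt_nonneg t, Real.pi_gt_three],
     by nlinarith [Real.pi_gt_three]⟩

lemma my_hasDeriv {t : ℝ} (ht0 : 0 < t) (ht1 : t ≤ 1) :
    HasDerivAt (fun t => Real.log (Real.cos (Real.sqrt t)))
      (-(Real.sin (Real.sqrt t) / (2 * Real.sqrt t * Real.cos (Real.sqrt t)))) t := by
  have h1 : HasDerivAt Real.sqrt (1 / (2 * Real.sqrt t)) t :=
    Real.hasDerivAt_sqrt (ne_of_gt ht0)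
  have h2 : HasDerivAt (fun t => Real.cos (Real.sqrt t))
      (-Real.sin (Real.sqrt t) * (1 / (2 * Real.sqrt t))) t :=
    (Real.hasDerivAt_cos (Real.sqrt t)).comp t h1
  have h3 := h2.log (ne_of_gt (my_cos_sqrt_pos ht0.le ht1))
  have hsp : 0 < Real.sqrt t := Real.sqrt_pos.2 ht0
  have hcp := my_cos_sqrt_pos ht0.le ht1
  convert h3 using 1
  field_simp

lemma my_logcos_concave :
    ConcaveOn ℝ (Set.Icc (0:ℝ) 1) (fun t => Real.log (Real.cos (Real.sqrt t))) := by
  apply AntitoneOn.concaveOn_of_deriv (convex_Icc 0 1)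
  · apply ContinuousOn.log
    · exact (Real.continuous_cos.comp Real.continuous_sqrt).continuousOn
    · exact fun t ht => ne_of_gt (my_cos_sqrt_pos ht.1 ht.2)
  · rw [interior_Icc]
    exact fun t ht => ((my_hasDeriv ht.1 ht.2.le).differentiableAt).differentiableWithinAt
  · rw [interior_Icc]
    intro t1 ht1 t2 ht2 h12
    rw [(my_hasDeriv ht1.1 ht1.2.le).deriv, (my_hasDeriv ht2.1 ht2.2.le).deriv]
    set a := Real.sqrt t1 with haa
    set b := Real.sqrt t2 with hbb
    have ha0 : 0 < a := Real.sqrt_pos.2 ht1.1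
    have hb0 : 0 < b := Real.sqrt_pos.2 ht2.1
    have hab : a ≤ b := Real.sqrt_le_sqrt h12
    have hb1 : b ≤ 1 := by
      rw [hbb, show (1:ℝ) = Real.sqrt 1 by simp]
      exact Real.sqrt_le_sqrt ht2.2.le
    have hca : 0 < Real.cos a := my_cos_sqrt_pos ht1.1.le ht1.2.le
    have hcb : 0 < Real.cos b := my_cos_sqrt_pos ht2.1.le ht2.2.le
    have key := my_tan_slope ha0 hab hb1
    rw [neg_le_neg_iff, div_le_div_iff₀ (by positivity) (by positivity)]
    nlinarith [key]

lemma my_cos_lb {x : ℝ} (h0 : 0 ≤ x) (h1 : x ≤ 1) :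
    Real.exp (Real.log (Real.cos 1) * x ^ 2) ≤ Real.cos x := by
  have hcx : 0 < Real.cos x :=
    Real.cos_pos_of_mem_Ioo ⟨by nlinarith [Real.pi_gt_three], by nlinarith [Real.pi_gt_three]⟩
  have key := my_logcos_concave.2 (Set.mem_Icc.2 ⟨le_refl 0, zero_le_one⟩)
      (Set.mem_Icc.2 ⟨zero_le_one, le_refl 1⟩)
      (show (0:ℝ) ≤ 1 - x ^ 2 by nlinarith) (show (0:ℝ) ≤ x ^ 2 by positivity)
      (show (1 - x ^ 2) + x ^ 2 = 1 by ring)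
  simp only [smul_eq_mul, mul_zero, mul_one, zero_add, Real.sqrt_zero, Real.cos_zero,
    Real.log_one] at key
  rw [Real.sqrt_sq h0, Real.sqrt_one] at key
  calc Real.exp (Real.log (Real.cos 1) * x ^ 2)
      ≤ Real.exp (Real.log (Real.cos x)) := by
        apply Real.exp_le_exp.2
        linarith [key]
    _ = Real.cos x := Real.exp_log hcx

lemma my_sin_cube {x : ℝ} (h0 : 0 ≤ x) : x - x ^ 3 / 6 ≤ Real.sin x := by
  have mono : MonotoneOn (fun x => Real.sin x - x + x ^ 3 / 6) (Set.Ici (0:ℝ)) := by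
    apply monotoneOn_of_deriv_nonneg (convex_Ici 0)
    · exact ((Real.continuous_sin.sub continuous_id).add
        ((continuous_pow 3).div_const 6)).continuousOn
    · intro x _
      exact (((Real.differentiable_sin x).sub (differentiable_id x)).add
        (((differentiable_pow 3).div_const 6) x)).differentiableWithinAt
    · intro x hx
      rw [interior_Ici] at hx
      have hd : HasDerivAt (fun x => Real.sin x - x + x ^ 3 / 6)
          (Real.cos x - 1 + (3 : ℕ) * x ^ 2 / 6) x := by
        have := ((Real.hasDerivAt_sin x).sub (hasDerivAt_id x)).add
          ((hasDerivAt_pow 3 x).div_const 6)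
        exact this
      rw [hd.deriv]
      have := Real.one_sub_sq_div_two_le_cos (x := x)
      push_cast
      nlinarith
  have h := mono (Set.mem_Ici.2 le_rfl) (Set.mem_Ici.2 h0) h0
  simp only [Real.sin_zero] at h
  norm_num at h
  linarith

lemma my_exp_neg {t : ℝ} (h0 : 0 ≤ t) (h2 : t ≤ 7 / 5) : Real.exp (-t) ≤ 1 - t / 2 := by
  have hq : 0 < 1 + t + t ^ 2 / 2 := by positivity
  have hmul : Real.exp (-t) * (1 + t + t ^ 2 / 2) ≤ (1 - t / 2) * (1 + t + t ^ 2 / 2) := by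
    calc Real.exp (-t) * (1 + t + t ^ 2 / 2)
        ≤ Real.exp (-t) * Real.exp t := by
          exact mul_le_mul_of_nonneg_left (Real.quadratic_le_exp_of_nonneg h0) (Real.exp_pos _).le
      _ = 1 := by rw [← Real.exp_add]; simp
      _ ≤ (1 - t / 2) * (1 + t + t ^ 2 / 2) := by nlinarith
  exact le_of_mul_le_mul_right hmul hq

lemma my_sin_lb {x : ℝ} (h0 : 0 ≤ x) (h2 : x ≤ 2) :
    x * Real.exp (-(x ^ 2 / 3)) ≤ Real.sin x := by
  have he := my_exp_neg (t := x ^ 2 / 3) (by positivity) (by nlinarith)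
  have h3 := my_sin_cube h0
  have h4 : x * Real.exp (-(x ^ 2 / 3)) ≤ x * (1 - x ^ 2 / 3 / 2) :=
    mul_le_mul_of_nonneg_left he h0
  apply h4.trans
  apply le_trans _ h3
  nlinarith

lemma my_sum (n : ℕ) : ∑ k ∈ Finset.range (n + 1),
    ((3 * (k : ℝ) + 1) ^ 2 + (3 * (k : ℝ) + 2) ^ 2)
    = 6 * (n : ℝ) ^ 3 + 18 * (n : ℝ) ^ 2 + 17 * (n : ℝ) + 5 := by
  induction n with
  | zero => norm_num
  | succ m ih =>
    rw [Finset.sum_range_succ, ih]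
    push_cast
    ring

theorem borwein_integrand_lower_bound (n : ℕ) (μ : ℝ) (hμ0 : 0 ≤ μ)
    (hμ : μ ≤ 6 * n + 3) (θ : ℝ) (hθ0 : 0 ≤ θ) (hθ : θ ≤ 1 / (3 * n + 2)) :
    μ * θ ^ 2 *
        Real.exp (-(6 * n + 3) ^ 2 * θ ^ 2 / 3 -
          (-Real.log (Real.cos 1)) * θ ^ 2 *
            (6 * n ^ 3 + 18 * n ^ 2 + 17 * n + 5)) ≤
      θ * Real.sin (μ * θ) *
        ∏ k ∈ Finset.range (n + 1),
          (Real.cos ((3 * k + 1) * θ) * Real.cos ((3 * k + 2) * θ)) := by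
  set L := Real.log (Real.cos 1) with hL
  have hn2 : (0:ℝ) < 3 * (n:ℝ) + 2 := by positivity
  have hθ1 : θ * (3 * (n:ℝ) + 2) ≤ 1 := (le_div_iff₀ hn2).1 hθ
  -- bound on μθ
  have hμθ0 : 0 ≤ μ * θ := mul_nonneg hμ0 hθ0
  have hμθ2 : μ * θ ≤ 2 := by nlinarith [mul_le_mul_of_nonneg_right hμ hθ0]
  have hsin : μ * θ * Real.exp (-((μ * θ) ^ 2 / 3)) ≤ Real.sin (μ * θ) :=
    my_sin_lb hμθ0 hμθ2
  -- product bound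
  have e2 : ∀ k ∈ Finset.range (n + 1),
      Real.exp (L * ((3 * (k:ℝ) + 1) * θ) ^ 2 + L * ((3 * (k:ℝ) + 2) * θ) ^ 2)
        ≤ Real.cos ((3 * (k:ℝ) + 1) * θ) * Real.cos ((3 * (k:ℝ) + 2) * θ) := by
    intro k hk
    have hk' : (k : ℝ) ≤ n := by
      exact_mod_cast Nat.lt_succ_iff.1 (Finset.mem_range.1 hk)
    have hx1 : (3 * (k:ℝ) + 1) * θ ≤ 1 := by nlinarith
    have hx2 : (3 * (k:ℝ) + 2) * θ ≤ 1 := by nlinarith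
    have hx10 : 0 ≤ (3 * (k:ℝ) + 1) * θ := by positivity
    have hx20 : 0 ≤ (3 * (k:ℝ) + 2) * θ := by positivity
    rw [Real.exp_add]
    have c1 := my_cos_lb hx10 hx1
    have c2 := my_cos_lb hx20 hx2
    exact mul_le_mul c1 c2 (Real.exp_pos _).le ((Real.exp_pos _).le.trans c1)
  have e1 : Real.exp (L * θ ^ 2 * (6 * (n:ℝ) ^ 3 + 18 * (n:ℝ) ^ 2 + 17 * (n:ℝ) + 5))
      = ∏ k ∈ Finset.range (n + 1),
          Real.exp (L * ((3 * (k:ℝ) + 1) * θ) ^ 2 + L * ((3 * (k:ℝ) + 2) * θ) ^ 2) := by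
    rw [← Real.exp_sum]
    congr 1
    rw [← my_sum n, Finset.mul_sum]
    exact Finset.sum_congr rfl fun k _ => by ring
  have hprod : Real.exp (L * θ ^ 2 * (6 * (n:ℝ) ^ 3 + 18 * (n:ℝ) ^ 2 + 17 * (n:ℝ) + 5))
      ≤ ∏ k ∈ Finset.range (n + 1),
          (Real.cos ((3 * (k:ℝ) + 1) * θ) * Real.cos ((3 * (k:ℝ) + 2) * θ)) := by
    rw [e1]
    exact Finset.prod_le_prod (fun k _ => (Real.exp_pos _).le) e2
  -- split exponential
  have hsplit : Real.exp (-(6 * (n:ℝ) + 3) ^ 2 * θ ^ 2 / 3 -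
        (-L) * θ ^ 2 * (6 * (n:ℝ) ^ 3 + 18 * (n:ℝ) ^ 2 + 17 * (n:ℝ) + 5))
      = Real.exp (-((6 * (n:ℝ) + 3) ^ 2 * θ ^ 2 / 3)) *
        Real.exp (L * θ ^ 2 * (6 * (n:ℝ) ^ 3 + 18 * (n:ℝ) ^ 2 + 17 * (n:ℝ) + 5)) := by
    rw [← Real.exp_add]
    congr 1
    ring
  rw [hsplit, ← mul_assoc]
  have hA : μ * θ ^ 2 * Real.exp (-((6 * (n:ℝ) + 3) ^ 2 * θ ^ 2 / 3)) ≤ θ * Real.sin (μ * θ) := by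
    have hmono : Real.exp (-((6 * (n:ℝ) + 3) ^ 2 * θ ^ 2 / 3))
        ≤ Real.exp (-((μ * θ) ^ 2 / 3)) := by
      apply Real.exp_le_exp.2
      nlinarith [mul_le_mul_of_nonneg_right hμ hθ0, sq_nonneg θ]
    calc μ * θ ^ 2 * Real.exp (-((6 * (n:ℝ) + 3) ^ 2 * θ ^ 2 / 3))
        ≤ μ * θ ^ 2 * Real.exp (-((μ * θ) ^ 2 / 3)) := by
          exact mul_le_mul_of_nonneg_left hmono (by positivity)
      _ = θ * (μ * θ * Real.exp (-((μ * θ) ^ 2 / 3))) := by ring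
      _ ≤ θ * Real.sin (μ * θ) := mul_le_mul_of_nonneg_left hsin hθ0
  have hsin0 : 0 ≤ θ * Real.sin (μ * θ) := by
    have : 0 ≤ μ * θ * Real.exp (-((μ * θ) ^ 2 / 3)) := by positivity
    exact mul_nonneg hθ0 (this.trans hsin)
  exact mul_le_mul hA hprod (Real.exp_pos _).le hsin0
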